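/- arXiv:1007.1098 — 4 statements merged into one kernel-verified Lean document; each statement's English description precedes it below -/
import Mathlib

section
/- Let L = ⊕_{i=−r}^{s} L_i be a simple, finite-dimensional, ℤ-graded Lie algebra over a field F. Then L_{−r} and L_s are irreducible L_0-modules under the adjoint action, i.e. the only L_0-submodules (subspaces V with ⁅L_0, V⁆ ⊆ V) of L_{−r}, respectively of L_s, are 0 and the whole component. -/
section Aux

variable {F : Type*} [Field F] {L : Type*} [LieRing L] [LieAlgebra F L]

open LieAlgebra

/-- Graded components of the ideal generated by `V ⊆ L_{-r}`:
`NComp 0 = V`, and `NComp (k+1)` (degree `k+1-r`) is the largest subspace of `Lg (k+1-r)`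
mapped into the lower components by all negative-degree bracket operators. -/
noncomputable def NComp (Lg : ℤ → Submodule F L) (r : ℤ) (V : Submodule F L) :
    ℕ → Submodule F L
  | 0 => V
  | (k+1) =>
      Lg ((k : ℤ) + 1 - r) ⊓
        ⨅ (i : ℤ) (_ : i < 0) (y : L) (_ : y ∈ Lg i),
          Submodule.comap (LieAlgebra.ad F L y)
            (if h : 0 ≤ (k : ℤ) + 1 + i then NComp Lg r V ((k : ℤ) + 1 + i).toNat else ⊥)
  termination_by k => k
  decreasing_by omega

/-- `ℤ`-indexed version of `NComp`. -/
noncomputable def NZ (Lg : ℤ → Submodule F L) (r : ℤ) (V : Submodule F L) (m : ℤ) :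
    Submodule F L :=
  if 0 ≤ m then NComp Lg r V m.toNat else ⊥

lemma NComp_succ (Lg : ℤ → Submodule F L) (r : ℤ) (V : Submodule F L) (k : ℕ) :
    NComp Lg r V (k+1) =
      Lg ((k : ℤ) + 1 - r) ⊓
        ⨅ (i : ℤ) (_ : i < 0) (y : L) (_ : y ∈ Lg i),
          Submodule.comap (LieAlgebra.ad F L y) (NZ Lg r V ((k : ℤ) + 1 + i)) := by
  rw [NComp]
  simp only [NZ, dite_eq_ite]

variable {Lg : ℤ → Submodule F L} {r : ℤ} {V : Submodule F L}

lemma NZ_zero : NZ Lg r V 0 = V := by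
  simp [NZ, NComp]

lemma NZ_le (hV : V ≤ Lg (-r)) (m : ℤ) : NZ Lg r V m ≤ Lg (m - r) := by
  unfold NZ
  split_ifs with h
  · rcases eq_or_lt_of_le h with h0 | h0
    · rw [← h0]
      simpa [NComp] using hV
    · obtain ⟨k, hk⟩ : ∃ k : ℕ, m.toNat = k + 1 := ⟨m.toNat - 1, by omega⟩
      rw [hk, NComp_succ]
      refine inf_le_left.trans ?_
      rw [show (k : ℤ) + 1 - r = m - r by omega]
  · exact bot_le

lemma NZ_bracket_neg (hV : V ≤ Lg (-r))
    (hbracket : ∀ i j : ℤ, ∀ x ∈ Lg i, ∀ y ∈ Lg j, ⁅x, y⁆ ∈ Lg (i + j))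
    (hlow : ∀ i : ℤ, i < -r → Lg i = ⊥)
    {i : ℤ} (hi : i < 0) {m : ℤ} {y x : L} (hy : y ∈ Lg i) (hx : x ∈ NZ Lg r V m) :
    ⁅y, x⁆ ∈ NZ Lg r V (m + i) := by
  rcases lt_trichotomy m 0 with hm | hm | hm
  · have hx0 : x = 0 := by simpa [NZ, not_le.mpr hm] using hx
    simp [hx0]
  · subst hm
    have hxV : x ∈ V := by simpa [NZ_zero] using hx
    have h1 : ⁅y, x⁆ ∈ Lg (i + -r) := hbracket _ _ _ hy _ (hV hxV)
    rw [hlow _ (by omega), Submodule.mem_bot] at h1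
    simp [h1]
  · have h0 : (0:ℤ) ≤ m := le_of_lt hm
    obtain ⟨k, hk⟩ : ∃ k : ℕ, (k : ℤ) + 1 = m := ⟨(m-1).toNat, by omega⟩
    have hmt : m.toNat = k + 1 := by omega
    have hx' : x ∈ NComp Lg r V (k+1) := by
      simp only [NZ, if_pos h0, hmt] at hx
      exact hx
    rw [NComp_succ] at hx'
    simp only [Submodule.mem_inf, Submodule.mem_iInf, Submodule.mem_comap,
      LieAlgebra.ad_apply] at hx'
    have h2 := hx'.2 i hi y hy
    rwa [show (k : ℤ) + 1 + i = m + i by omega] at h2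

lemma NZ_bracket (hV : V ≤ Lg (-r))
    (hV0 : ∀ x ∈ Lg 0, ∀ v ∈ V, ⁅x, v⁆ ∈ V)
    (hbracket : ∀ i j : ℤ, ∀ x ∈ Lg i, ∀ y ∈ Lg j, ⁅x, y⁆ ∈ Lg (i + j))
    (hlow : ∀ i : ℤ, i < -r → Lg i = ⊥) :
    ∀ (i m : ℤ), ∀ y ∈ Lg i, ∀ x ∈ NZ Lg r V m, ⁅y, x⁆ ∈ NZ Lg r V (m + i) := by
  suffices H : ∀ n : ℕ, ∀ i : ℤ, i.toNat = n → ∀ p : ℕ, ∀ m : ℤ, m.toNat = p →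
      ∀ y ∈ Lg i, ∀ x ∈ NZ Lg r V m, ⁅y, x⁆ ∈ NZ Lg r V (m + i) by
    intro i m
    exact H i.toNat i rfl m.toNat m rfl
  intro n
  induction n using Nat.strong_induction_on with
  | _ n ihn =>
  intro i hin p
  induction p using Nat.strong_induction_on with
  | _ p ihp =>
  intro m hmp y hy x hx
  rcases lt_trichotomy i 0 with hi | hi | hi
  · exact NZ_bracket_neg hV hbracket hlow hi hy hx
  · subst hi
    rcases lt_trichotomy m 0 with hm | hm | hm
    · have hx0 : x = 0 := by simpa [NZ, not_le.mpr hm] using hx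
      simp [hx0]
    · subst hm
      have hxV : x ∈ V := by simpa [NZ_zero] using hx
      have h1 : ⁅y, x⁆ ∈ V := hV0 y hy x hxV
      simpa [NZ_zero] using h1
    · rw [add_zero]
      obtain ⟨k, hk⟩ : ∃ k : ℕ, (k : ℤ) + 1 = m := ⟨(m-1).toNat, by omega⟩
      rw [show NZ Lg r V m = NComp Lg r V (k+1) by
        simp [NZ, le_of_lt hm, show m.toNat = k + 1 by omega]]
      rw [NComp_succ]
      refine Submodule.mem_inf.mpr ⟨?_, ?_⟩
      · have hxL : x ∈ Lg (m - r) := NZ_le hV m hx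
        have h1 := hbracket 0 (m - r) y hy x hxL
        rwa [show (0:ℤ) + (m - r) = (k : ℤ) + 1 - r by omega] at h1
      · simp only [Submodule.mem_iInf, Submodule.mem_comap, LieAlgebra.ad_apply]
        intro i' hi' y' hy'
        rw [show (k : ℤ) + 1 + i' = m + i' by omega, leibniz_lie y' y x]
        apply Submodule.add_mem
        · have hb : ⁅y', y⁆ ∈ Lg i' := by
            have := hbracket i' 0 y' hy' y hy
            rwa [add_zero] at this
          exact NZ_bracket_neg hV hbracket hlow hi' hb hx
        · have h1 : ⁅y', x⁆ ∈ NZ Lg r V (m + i') :=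
            NZ_bracket_neg hV hbracket hlow hi' hy' hx
          have hlt : (m + i').toNat < p := by omega
          have h2 := ihp _ hlt (m + i') rfl y hy _ h1
          rwa [add_zero] at h2
  · rcases lt_or_ge m 0 with hm | hm
    · have hx0 : x = 0 := by simpa [NZ, not_le.mpr hm] using hx
      simp [hx0]
    · obtain ⟨k, hk⟩ : ∃ k : ℕ, (k : ℤ) + 1 = m + i := ⟨(m + i - 1).toNat, by omega⟩
      rw [show NZ Lg r V (m + i) = NComp Lg r V (k+1) by
        simp [NZ, show (0:ℤ) ≤ m + i by omega, show (m + i).toNat = k + 1 by omega]]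
      rw [NComp_succ]
      refine Submodule.mem_inf.mpr ⟨?_, ?_⟩
      · have hxL : x ∈ Lg (m - r) := NZ_le hV m hx
        have h1 := hbracket i (m - r) y hy x hxL
        rwa [show i + (m - r) = (k : ℤ) + 1 - r by omega] at h1
      · simp only [Submodule.mem_iInf, Submodule.mem_comap, LieAlgebra.ad_apply]
        intro i' hi' y' hy'
        rw [show (k : ℤ) + 1 + i' = m + i + i' by omega, leibniz_lie y' y x]
        apply Submodule.add_mem
        · have hb : ⁅y', y⁆ ∈ Lg (i' + i) := hbracket i' i y' hy' y hy
          have hlt : (i' + i).toNat < n := by omega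
          have h2 := ihn _ hlt (i' + i) rfl m.toNat m rfl _ hb x hx
          rwa [show m + (i' + i) = m + i + i' by ring] at h2
        · have h1 : ⁅y', x⁆ ∈ NZ Lg r V (m + i') :=
            NZ_bracket_neg hV hbracket hlow hi' hy' hx
          rcases lt_or_ge (m + i') 0 with hmi' | hmi'
          · have h0 : ⁅y', x⁆ = 0 := by simpa [NZ, not_le.mpr hmi'] using h1
            simp [h0]
          · have hlt : (m + i').toNat < p := by omega
            have h2 := ihp _ hlt (m + i') rfl y hy _ h1
            rwa [show m + i' + i = m + i + i' by ring] at h2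

theorem aux_irred (F : Type*) [Field F] (L : Type*) [LieRing L] [LieAlgebra F L]
    [LieAlgebra.IsSimple F L] (r : ℤ) (Lg : ℤ → Submodule F L)
    (hinternal : DirectSum.IsInternal Lg)
    (hbracket : ∀ i j : ℤ, ∀ x ∈ Lg i, ∀ y ∈ Lg j, ⁅x, y⁆ ∈ Lg (i + j))
    (hlow : ∀ i : ℤ, i < -r → Lg i = ⊥)
    (V : Submodule F L) (hVle : V ≤ Lg (-r))
    (hV0 : ∀ x ∈ Lg 0, ∀ v ∈ V, ⁅x, v⁆ ∈ V) : V = ⊥ ∨ V = Lg (-r) := by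
  by_cases hV : V = ⊥
  · exact Or.inl hV
  refine Or.inr ?_
  set N : Submodule F L := ⨆ m : ℤ, NZ Lg r V m with hN
  have hVN : V ≤ N := NZ_zero.symm.trans_le (le_iSup (fun m => NZ Lg r V m) 0)
  have hstep : ∀ (j : ℤ), ∀ y ∈ Lg j, ∀ x ∈ N, ⁅y, x⁆ ∈ N := by
    intro j y hy x hx
    refine Submodule.iSup_induction (motive := fun w => ⁅y, w⁆ ∈ N) _ hx
      (fun m x' hx' => ?_) (by simp) (fun a b ha hb => ?_)
    · exact le_iSup (fun m => NZ Lg r V m) (m + j)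
        (NZ_bracket hVle hV0 hbracket hlow j m y hy x' hx')
    · show ⁅y, a + b⁆ ∈ N
      rw [lie_add]; exact N.add_mem ha hb
  have hlie : ∀ (z : L), ∀ x ∈ N, ⁅z, x⁆ ∈ N := by
    intro z x hx
    have hz : z ∈ ⨆ i, Lg i := by
      rw [hinternal.submodule_iSup_eq_top]; trivial
    refine Submodule.iSup_induction (motive := fun w => ⁅w, x⁆ ∈ N) _ hz
      (fun j y hy => hstep j y hy x hx) (by simp) (fun a b ha hb => ?_)
    show ⁅a + b, x⁆ ∈ N
    rw [add_lie]; exact N.add_mem ha hb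
  let I : LieIdeal F L := { N with lie_mem := fun {z w} hw => hlie z w hw }
  have hIN : (I : Submodule F L) = N := rfl
  rcases LieAlgebra.IsSimple.eq_bot_or_eq_top I with hI | hI
  · exfalso
    apply hV
    have hNbot : N = ⊥ := by
      rw [← hIN, hI]; rfl
    exact le_bot_iff.mp (hVN.trans_eq hNbot)
  · have hNtop : N = ⊤ := by
      rw [← hIN, hI]; rfl
    refine le_antisymm hVle ?_
    intro x hx
    have hxN : x ∈ N := by rw [hNtop]; trivial
    set W : Submodule F L := ⨆ (j : ℤ) (_ : j ≠ -r), Lg j with hW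
    have hNle : N ≤ V ⊔ W := by
      refine iSup_le fun m => ?_
      rcases lt_trichotomy m 0 with hm | hm | hm
      · have : NZ Lg r V m = ⊥ := by simp [NZ, not_le.mpr hm]
        rw [this]; exact bot_le
      · subst hm
        rw [NZ_zero]; exact le_sup_left
      · refine (NZ_le hVle m).trans (le_trans ?_ le_sup_right)
        exact le_iSup₂ (f := fun (j : ℤ) (_ : j ≠ -r) => Lg j) (m - r) (by omega)
    obtain ⟨v, hv, w, hw, hvw⟩ := Submodule.mem_sup.mp (hNle hxN)
    have hwd : w ∈ Lg (-r) := by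
      have hw' : w = x - v := by rw [← hvw]; abel
      rw [hw']
      exact Submodule.sub_mem _ hx (hVle hv)
    have hw0 : w = 0 :=
      Submodule.disjoint_def.mp (hinternal.submodule_iSupIndep (-r)) w hwd hw
    rw [hw0, add_zero] at hvw
    rw [← hvw]
    exact hv

end Aux

/-- Let `L = ⊕_{i=-r}^{s} L_i` be a simple, finite-dimensional, ℤ-graded Lie
algebra over a field `F`. Then `L_{-r}` and `L_s` are irreducible `L_0`-modules under the
adjoint action: the only `L_0`-submodules of `L_{-r}` (resp. `L_s`) are `0` and the whole
component. -/
theorem graded_simple_extreme_components_irreducible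
    (F : Type*) [Field F] (L : Type*) [LieRing L] [LieAlgebra F L]
    [FiniteDimensional F L] [LieAlgebra.IsSimple F L]
    (r s : ℤ) (hr : 1 ≤ r) (hs : 1 ≤ s)
    (Lg : ℤ → Submodule F L)
    (hinternal : DirectSum.IsInternal Lg)
    (hbracket : ∀ i j : ℤ, ∀ x ∈ Lg i, ∀ y ∈ Lg j, ⁅x, y⁆ ∈ Lg (i + j))
    (hbound : ∀ i : ℤ, (i < -r ∨ s < i) → Lg i = ⊥)
    (hner : Lg (-r) ≠ ⊥) (hnes : Lg s ≠ ⊥) :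
    (∀ V : Submodule F L, V ≤ Lg (-r) →
        (∀ x ∈ Lg 0, ∀ v ∈ V, ⁅x, v⁆ ∈ V) → V = ⊥ ∨ V = Lg (-r)) ∧
    (∀ V : Submodule F L, V ≤ Lg s →
        (∀ x ∈ Lg 0, ∀ v ∈ V, ⁅x, v⁆ ∈ V) → V = ⊥ ∨ V = Lg s) := by
  constructor
  · intro V hVle hV0
    exact aux_irred F L r Lg hinternal hbracket
      (fun i hi => hbound i (Or.inl hi)) V hVle hV0
  · intro V hVle hV0
    -- reverse the grading
    set Lg' : ℤ → Submodule F L := fun i => Lg (-i) with hLg'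
    obtain ⟨hind, hsup⟩ :=
      (DirectSum.isInternal_submodule_iff_iSupIndep_and_iSup_eq_top Lg).mp hinternal
    have hinternal' : DirectSum.IsInternal Lg' := by
      refine (DirectSum.isInternal_submodule_iff_iSupIndep_and_iSup_eq_top Lg').mpr
        ⟨hind.comp neg_injective, ?_⟩
      rw [← hsup]
      exact (Equiv.neg ℤ).iSup_comp (g := Lg)
    have hbracket' : ∀ i j : ℤ, ∀ x ∈ Lg' i, ∀ y ∈ Lg' j, ⁅x, y⁆ ∈ Lg' (i + j) := by
      intro i j x hx y hy
      have := hbracket (-i) (-j) x hx y hy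
      rwa [show -i + -j = -(i + j) by ring] at this
    have hlow' : ∀ i : ℤ, i < -s → Lg' i = ⊥ := by
      intro i hi
      exact hbound (-i) (Or.inr (by omega))
    have hVle' : V ≤ Lg' (-s) := by
      simpa [hLg'] using hVle
    have hV0' : ∀ x ∈ Lg' 0, ∀ v ∈ V, ⁅x, v⁆ ∈ V := by
      intro x hx v hv
      exact hV0 x (by simpa [hLg'] using hx) v hv
    have := aux_irred F L s Lg' hinternal' hbracket' hlow' V hVle' hV0'
    simpa [hLg'] using this
end

section
/- Let L = ⊕_{i=−r}^{s} L_i be a simple, finite-dimensional, ℤ-graded Lie algebra over a field F. Then ⁅L_0, L_s⁆ = L_s and ⁅L_0, L_{−r}⁆ = L_{−r}. -/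
namespace GradedSimpleAux

open Submodule

variable {F : Type*} [Field F] {L : Type*} [LieRing L] [LieAlgebra F L]

/-- Elements reachable from the submodule `B` (placed in degree `t`) by iterated bracketing
with homogeneous elements whose degree satisfies the condition `c`. -/
inductive Reach (Lg : ℤ → Submodule F L) (B : Submodule F L) (t : ℤ) (c : ℤ → Prop) : L → ℤ → Prop
  | base {z : L} (hz : z ∈ B) : Reach Lg B t c z t
  | step {x z : L} {j d : ℤ} (hj : c j) (hx : x ∈ Lg j) (hz : Reach Lg B t c z d) :
      Reach Lg B t c ⁅x, z⁆ (j + d)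

variable {Lg : ℤ → Submodule F L} {B : Submodule F L} {t : ℤ} {c : ℤ → Prop}

theorem Reach.mem_graded (hbracket : ∀ i j : ℤ, ∀ x ∈ Lg i, ∀ y ∈ Lg j, ⁅x, y⁆ ∈ Lg (i + j))
    (hB : B ≤ Lg t) {z d} (h : Reach Lg B t c z d) : z ∈ Lg d := by
  induction h with
  | base hz => exact hB hz
  | @step x z j d hj hx _ ih => exact hbracket _ _ _ hx _ ih

/-- The span of all reachable elements. -/
def reachSpan (Lg : ℤ → Submodule F L) (B : Submodule F L) (t : ℤ) (c : ℤ → Prop) :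
    Submodule F L :=
  span F {z | ∃ d, Reach Lg B t c z d}

theorem base_le_reachSpan : B ≤ reachSpan Lg B t c :=
  fun _ hz => subset_span ⟨t, .base hz⟩

theorem lie_mem_reachSpan_of_c {j : ℤ} (hj : c j) {x : L} (hx : x ∈ Lg j) {w : L}
    (hw : w ∈ reachSpan Lg B t c) : ⁅x, w⁆ ∈ reachSpan Lg B t c := by
  induction hw using span_induction with
  | mem z hz => obtain ⟨d, hd⟩ := hz; exact subset_span ⟨j + d, .step hj hx hd⟩
  | zero => simpa using zero_mem _
  | add a b _ _ ha hb => rw [lie_add]; exact add_mem ha hb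
  | smul r a _ ha => rw [lie_smul]; exact smul_mem _ _ ha

theorem lie_mem_reachSpan_of_not_c
    (hbracket : ∀ i j : ℤ, ∀ x ∈ Lg i, ∀ y ∈ Lg j, ⁅x, y⁆ ∈ Lg (i + j))
    (hbase : ∀ i : ℤ, ¬ c i → ∀ x ∈ Lg i, ∀ z ∈ B, ⁅x, z⁆ ∈ reachSpan Lg B t c)
    {z d} (hz : Reach Lg B t c z d) :
    ∀ i : ℤ, ¬ c i → ∀ x ∈ Lg i, ⁅x, z⁆ ∈ reachSpan Lg B t c := by
  induction hz with
  | base hz => exact fun i hi x hx => hbase i hi x hx _ hz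
  | @step y u j d hj hy hu ih =>
    intro i hi x hx
    rw [leibniz_lie]
    refine add_mem ?_ (lie_mem_reachSpan_of_c hj hy (ih i hi x hx))
    by_cases hc : c (i + j)
    · exact lie_mem_reachSpan_of_c hc (hbracket i j x hx y hy) (subset_span ⟨_, hu⟩)
    · exact ih (i + j) hc _ (hbracket i j x hx y hy)

theorem reachSpan_lie_mem
    (htop : (⨆ i, Lg i) = ⊤)
    (hbracket : ∀ i j : ℤ, ∀ x ∈ Lg i, ∀ y ∈ Lg j, ⁅x, y⁆ ∈ Lg (i + j))
    (hbase : ∀ i : ℤ, ¬ c i → ∀ x ∈ Lg i, ∀ z ∈ B, ⁅x, z⁆ ∈ reachSpan Lg B t c)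
    (x w : L) (hw : w ∈ reachSpan Lg B t c) : ⁅x, w⁆ ∈ reachSpan Lg B t c := by
  induction hw using span_induction with
  | mem z hz =>
    obtain ⟨d, hd⟩ := hz
    have hx : x ∈ (⨆ i, Lg i) := htop ▸ mem_top
    refine Submodule.iSup_induction Lg (motive := fun y => ⁅y, z⁆ ∈ reachSpan Lg B t c) hx
      (fun i a ha => ?_) (by simp) (fun a b ha hb => by show ⁅a + b, z⁆ ∈ _; rw [show ⁅a + b, z⁆ = ⁅a,z⁆ + ⁅b,z⁆ from add_lie a b z]; exact add_mem ha hb)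
    by_cases hc : c i
    · exact lie_mem_reachSpan_of_c hc ha (subset_span ⟨_, hd⟩)
    · exact lie_mem_reachSpan_of_not_c hbracket hbase hd i hc a ha
  | zero => simpa using zero_mem _
  | add a b _ _ ha hb => rw [lie_add]; exact add_mem ha hb
  | smul r a _ ha => rw [lie_smul]; exact smul_mem _ _ ha

theorem main [LieAlgebra.IsSimple F L]
    (r s : ℤ) (hr : 1 ≤ r) (hs : 1 ≤ s) (Lg : ℤ → Submodule F L)
    (hinternal : DirectSum.IsInternal Lg)
    (hbracket : ∀ i j : ℤ, ∀ x ∈ Lg i, ∀ y ∈ Lg j, ⁅x, y⁆ ∈ Lg (i + j))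
    (hbound : ∀ i : ℤ, (i < -r ∨ s < i) → Lg i = ⊥)
    (hner : Lg (-r) ≠ ⊥) (hnes : Lg s ≠ ⊥) :
    span F {z : L | ∃ x ∈ Lg 0, ∃ y ∈ Lg s, z = ⁅x, y⁆} = Lg s := by
  haveI : DirectSum.Decomposition Lg := hinternal.chooseDecomposition
  have htop : (⨆ i, Lg i) = ⊤ := hinternal.submodule_iSup_eq_top
  -- a nonzero element lies in only one graded piece
  have hzero : ∀ {a b : ℤ}, a ≠ b → ∀ {z : L}, z ∈ Lg a → z ∈ Lg b → z = 0 := by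
    intro a b hab z hza hzb
    rw [← DirectSum.decompose_of_mem_same Lg hzb, DirectSum.decompose_of_mem_ne Lg hza hab]
  -- projection of a span of homogeneous elements
  have proj : ∀ (S : Set L), (∀ z ∈ S, ∃ d, z ∈ Lg d) → ∀ (m : ℤ), ∀ x ∈ Lg m,
      x ∈ span F S → x ∈ span F (S ∩ (Lg m : Set L)) := by
    intro S hS m x hxm hxS
    set π : L →ₗ[F] L := (Lg m).subtype ∘ₗ (DirectSum.component F ℤ (fun i => Lg i) m) ∘ₗ
      (DirectSum.decomposeLinearEquiv Lg).toLinearMap with hπdef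
    have hπ : ∀ z : L, π z = (DirectSum.decompose Lg z m : L) := fun z => rfl
    have key : ∀ w ∈ span F S, π w ∈ span F (S ∩ (Lg m : Set L)) := by
      intro w hw
      induction hw using span_induction with
      | mem z hz =>
        obtain ⟨d, hd⟩ := hS z hz
        by_cases hdm : d = m
        · have hzz : π z = z := by rw [hπ, DirectSum.decompose_of_mem_same Lg (hdm ▸ hd)]
          rw [hzz]; exact subset_span ⟨hz, hdm ▸ hd⟩
        · have hzz : π z = 0 := by rw [hπ, DirectSum.decompose_of_mem_ne Lg hd hdm]
          rw [hzz]; exact zero_mem _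
      | zero => rw [map_zero]; exact zero_mem _
      | add a b _ _ ha hb => rw [map_add]; exact add_mem ha hb
      | smul r a _ ha => rw [map_smul]; exact smul_mem _ _ ha
    have h1 : π x = x := by rw [hπ, DirectSum.decompose_of_mem_same Lg hxm]
    rw [← h1]
    exact key x hxS
  set V : Submodule F L := span F {z : L | ∃ x ∈ Lg 0, ∃ y ∈ Lg s, z = ⁅x, y⁆} with hVdef
  have hVle : V ≤ Lg s := by
    rw [hVdef, span_le]
    rintro z ⟨x, hx, y, hy, rfl⟩
    simpa using hbracket 0 s x hx y hy
  have hV0 : ∀ x ∈ Lg 0, ∀ v ∈ V, ⁅x, v⁆ ∈ V := by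
    intro x hx v hv
    induction hv using span_induction with
    | mem z hz =>
      obtain ⟨a, ha, y, hy, rfl⟩ := hz
      rw [leibniz_lie]
      refine add_mem (subset_span ⟨⁅x, a⁆, by simpa using hbracket 0 0 x hx a ha, y, hy, rfl⟩)
        (subset_span ⟨a, ha, ⁅x, y⁆, by simpa using hbracket 0 s x hx y hy, rfl⟩)
    | zero => simpa using zero_mem _
    | add a b _ _ ha hb => rw [lie_add]; exact add_mem ha hb
    | smul r a _ ha => rw [lie_smul]; exact smul_mem _ _ ha
  -- the ideal generated by V under nonpositive brackets
  have hbaseW : ∀ i : ℤ, ¬ (i ≤ 0) → ∀ x ∈ Lg i, ∀ z ∈ V,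
      ⁅x, z⁆ ∈ reachSpan Lg V s (· ≤ 0) := by
    intro i hi x hx z hz
    have h := hbracket i s x hx z (hVle hz)
    rw [hbound (i + s) (Or.inr (by omega)), Submodule.mem_bot] at h
    rw [h]; exact zero_mem _
  let I : LieIdeal F L :=
    { reachSpan Lg V s (· ≤ 0) with
      lie_mem := fun {x m} hm => reachSpan_lie_mem htop hbracket hbaseW x m hm }
  rcases LieAlgebra.IsSimple.eq_bot_or_eq_top I with hI | hI
  · -- V = 0; derive a contradiction
    exfalso
    have hV0' : ∀ x ∈ Lg 0, ∀ y ∈ Lg s, ⁅x, y⁆ = (0 : L) := by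
      intro x hx y hy
      have h : ⁅x, y⁆ ∈ I := base_le_reachSpan (subset_span ⟨x, hx, y, hy, rfl⟩)
      rw [hI] at h
      simpa using h
    have hbase3 : ∀ i : ℤ, ¬ (i ≤ -1) → ∀ x ∈ Lg i, ∀ z ∈ Lg s,
        ⁅x, z⁆ ∈ reachSpan Lg (Lg s) s (· ≤ -1) := by
      intro i hi x hx z hz
      by_cases h0 : i = 0
      · subst h0; rw [hV0' x hx z hz]; exact zero_mem _
      · have h := hbracket i s x hx z hz
        rw [hbound (i + s) (Or.inr (by omega)), Submodule.mem_bot] at h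
        rw [h]; exact zero_mem _
    let I3 : LieIdeal F L :=
      { reachSpan Lg (Lg s) s (· ≤ -1) with
        lie_mem := fun {x m} hm => reachSpan_lie_mem htop hbracket hbase3 x m hm }
    rcases LieAlgebra.IsSimple.eq_bot_or_eq_top I3 with hI3 | hI3
    · refine hnes ?_
      rw [eq_bot_iff]
      intro z hz
      have h : z ∈ I3 := base_le_reachSpan hz
      rw [hI3] at h
      simpa using h
    · -- the kill lemma
      have kill : ∀ (z : L) (e : ℤ), Reach Lg (Lg s) s (· ≤ -1) z e →
          ∀ m : ℤ, s ≤ e + m → ∀ y ∈ Lg m, ⁅z, y⁆ = 0 := by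
        intro z e h
        induction h with
        | base hz =>
          intro m hm y hy
          rename_i z'
          by_cases hm0 : m = 0
          · subst hm0
            rw [← lie_skew, hV0' y hy z' hz, neg_zero]
          · have h := hbracket s m z' hz y hy
            rw [hbound (s + m) (Or.inr (by omega)), Submodule.mem_bot] at h
            exact h
        | @step x u j d hj hx hu ih =>
          intro m hm y hy
          have h1 : ⁅u, y⁆ = 0 := ih m (by omega) y hy
          have h2 : ⁅u, ⁅x, y⁆⁆ = 0 := ih (j + m) (by omega) _ (hbracket j m x hx y hy)
          have h3 := leibniz_lie x u y
          rw [h1, h2, lie_zero, add_zero] at h3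
          exact h3.symm
      -- every pair of degrees summing to at least s brackets to zero
      have killall : ∀ e m : ℤ, s ≤ e + m → ∀ x ∈ Lg e, ∀ y ∈ Lg m, ⁅x, y⁆ = 0 := by
        intro e m hem x hx y hy
        have hxW : x ∈ reachSpan Lg (Lg s) s (· ≤ -1) := by
          have h : x ∈ I3 := hI3 ▸ LieSubmodule.mem_top x
          exact h
        have hS3 : ∀ z ∈ {z : L | ∃ d, Reach Lg (Lg s) s (· ≤ -1) z d}, ∃ d, z ∈ Lg d := by
          rintro z ⟨d, hd⟩; exact ⟨d, hd.mem_graded hbracket le_rfl⟩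
        have hx' := proj _ hS3 e x hx hxW
        have key2 : ∀ w ∈ span F ({z : L | ∃ d, Reach Lg (Lg s) s (· ≤ -1) z d} ∩
            (Lg e : Set L)), ⁅w, y⁆ = 0 := by
          intro w hw
          induction hw using span_induction with
          | mem z hz =>
            obtain ⟨⟨d, hzd⟩, hze⟩ := hz
            by_cases hz0 : z = 0
            · rw [hz0, zero_lie]
            · have hde : d = e := by
                by_contra hne
                exact hz0 (hzero hne (hzd.mem_graded hbracket le_rfl) hze)
              exact kill z d hzd m (by omega) y hy
          | zero => rw [zero_lie]
          | add a b _ _ ha hb => rw [add_lie, ha, hb, add_zero]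
          | smul r a _ ha => rw [smul_lie, ha, smul_zero]
        exact key2 x hx'
      -- the sum of all graded pieces of degree below s is a proper nonzero ideal
      set N : Submodule F L := ⨆ j : {j : ℤ // j ≠ s}, Lg j with hNdef
      have hle : ∀ j : ℤ, j ≠ s → Lg j ≤ N :=
        fun j hj => le_iSup (fun j : {j : ℤ // j ≠ s} => Lg j) ⟨j, hj⟩
      have hlie1 : ∀ (j : ℤ), j ≠ s → ∀ w ∈ Lg j, ∀ x : L, ⁅x, w⁆ ∈ N := by
        intro j hj w hw x
        have hx : x ∈ ⨆ i, Lg i := htop ▸ mem_top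
        refine Submodule.iSup_induction Lg (motive := fun a => ⁅a, w⁆ ∈ N) hx (fun i a ha => ?_)
          (show ⁅(0 : L), w⁆ ∈ N by rw [zero_lie]; exact zero_mem _)
          (fun a b ha hb =>
            show ⁅a + b, w⁆ ∈ N by rw [add_lie]; exact add_mem ha hb)
        by_cases hij : i + j = s
        · rcases lt_or_gt_of_ne hj with hlt | hgt
          · have h := killall i j (by omega) a ha w hw
            rw [h]; exact zero_mem _
          · have hw0 : w = 0 := by
              have := hw
              rw [hbound j (Or.inr hgt), Submodule.mem_bot] at this
              exact this
            rw [hw0, lie_zero]; exact zero_mem _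
        · exact hle _ hij (hbracket i j a ha w hw)
      have hlieN : ∀ (x w : L), w ∈ N → ⁅x, w⁆ ∈ N := by
        intro x w hw
        refine Submodule.iSup_induction _ (motive := fun w => ⁅x, w⁆ ∈ N) hw
          (fun j a ha => hlie1 j j.2 a ha x)
          (show ⁅x, (0 : L)⁆ ∈ N by rw [lie_zero]; exact zero_mem _)
          (fun a b ha hb => show ⁅x, a + b⁆ ∈ N by rw [lie_add]; exact add_mem ha hb)
      let I4 : LieIdeal F L := { N with lie_mem := fun {x m} hm => hlieN x m hm }
      rcases LieAlgebra.IsSimple.eq_bot_or_eq_top I4 with hI4 | hI4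
      · refine hner ?_
        rw [eq_bot_iff]
        intro z hz
        have h : z ∈ I4 := hle (-r) (by omega) hz
        rw [hI4] at h
        simpa using h
      · refine hnes ?_
        rw [eq_bot_iff]
        intro y hy
        have hyN : y ∈ N := by
          have h : y ∈ I4 := hI4 ▸ LieSubmodule.mem_top y
          exact h
        rw [hNdef, iSup_eq_span] at hyN
        have hS4 : ∀ z ∈ ⋃ j : {j : ℤ // j ≠ s}, (Lg j : Set L), ∃ d, z ∈ Lg d := by
          intro z hz
          obtain ⟨j, hj⟩ := Set.mem_iUnion.mp hz
          exact ⟨j, hj⟩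
        have hy' := proj _ hS4 s y hy hyN
        have : span F ((⋃ j : {j : ℤ // j ≠ s}, (Lg j : Set L)) ∩ (Lg s : Set L)) ≤ ⊥ := by
          rw [span_le]
          rintro z ⟨hz1, hz2⟩
          obtain ⟨j, hj⟩ := Set.mem_iUnion.mp hz1
          exact (Submodule.mem_bot F).mpr (hzero j.2 hj hz2)
        exact this hy'
  · -- the main case : the reach-span of V is everything
    refine le_antisymm hVle ?_
    intro y hy
    have hyW : y ∈ reachSpan Lg V s (· ≤ 0) := by
      have h : y ∈ I := hI ▸ LieSubmodule.mem_top y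
      exact h
    have hSW : ∀ z ∈ {z : L | ∃ d, Reach Lg V s (· ≤ 0) z d}, ∃ d, z ∈ Lg d := by
      rintro z ⟨d, hd⟩; exact ⟨d, hd.mem_graded hbracket hVle⟩
    have hy' := proj _ hSW s y hy hyW
    have key : ∀ (z : L) (d : ℤ), Reach Lg V s (· ≤ 0) z d → z ∈ Lg s → z ∈ V := by
      intro z d h
      induction h with
      | base hz => exact fun _ => hz
      | @step x u j d hj hx hu ih =>
        intro hmem
        by_cases h0 : ⁅x, u⁆ = (0 : L)
        · rw [h0]; exact zero_mem _
        · have hud : u ∈ Lg d := hu.mem_graded hbracket hVle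
          have hjd : j + d = s := by
            by_contra hne
            exact h0 (hzero hne (hbracket j d x hx u hud) hmem)
          by_cases hds : d = s
          · have hj0 : j = 0 := by omega
            subst hj0
            exact hV0 x hx u (ih (hds ▸ hud))
          · have hu0 : u = 0 := by
              have := hud
              rw [hbound d (Or.inr (by omega)), Submodule.mem_bot] at this
              exact this
            rw [hu0, lie_zero]; exact zero_mem _
    have : span F ({z : L | ∃ d, Reach Lg V s (· ≤ 0) z d} ∩ (Lg s : Set L)) ≤ V := by
      rw [span_le]
      rintro z ⟨⟨d, hzd⟩, hzs⟩
      exact key z d hzd hzs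
    exact this hy'

end GradedSimpleAux




/-- Let `L = ⊕_{i=-r}^{s} L_i` be a simple, finite-dimensional, ℤ-graded Lie
algebra over a field `F`. Then `⁅L_0, L_s⁆ = L_s` and `⁅L_0, L_{-r}⁆ = L_{-r}`, where `⁅A, B⁆`
denotes the `F`-span of all brackets. -/
theorem graded_simple_bracket_zero_extreme
    (F : Type*) [Field F] (L : Type*) [LieRing L] [LieAlgebra F L]
    [FiniteDimensional F L] [LieAlgebra.IsSimple F L]
    (r s : ℤ) (hr : 1 ≤ r) (hs : 1 ≤ s)
    (Lg : ℤ → Submodule F L)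
    (hinternal : DirectSum.IsInternal Lg)
    (hbracket : ∀ i j : ℤ, ∀ x ∈ Lg i, ∀ y ∈ Lg j, ⁅x, y⁆ ∈ Lg (i + j))
    (hbound : ∀ i : ℤ, (i < -r ∨ s < i) → Lg i = ⊥)
    (hner : Lg (-r) ≠ ⊥) (hnes : Lg s ≠ ⊥) :
    Submodule.span F {z : L | ∃ x ∈ Lg 0, ∃ y ∈ Lg s, z = ⁅x, y⁆} = Lg s ∧
    Submodule.span F {z : L | ∃ x ∈ Lg 0, ∃ y ∈ Lg (-r), z = ⁅x, y⁆} = Lg (-r) := by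
  constructor
  · exact GradedSimpleAux.main r s hr hs Lg hinternal hbracket hbound hner hnes
  · have hinternal' : DirectSum.IsInternal (fun i : ℤ => Lg (-i)) := by
      rw [DirectSum.isInternal_submodule_iff_iSupIndep_and_iSup_eq_top] at hinternal ⊢
      obtain ⟨h1, h2⟩ := hinternal
      refine ⟨h1.comp neg_injective, ?_⟩
      rw [← h2]
      exact (Equiv.neg ℤ).iSup_comp (g := Lg)
    have h := GradedSimpleAux.main s r hs hr (fun i => Lg (-i)) hinternal'
      (fun i j x hx y hy => by
        have := hbracket (-i) (-j) x hx y hy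
        rwa [show -i + -j = -(i + j) by ring] at this)
      (fun i hi => by
        rcases hi with h | h
        · exact hbound (-i) (Or.inr (by omega))
        · exact hbound (-i) (Or.inl (by omega)))
      (by simpa using hnes) hner
    simpa using h
end

section
/- Let L = ⊕_{i=−r}^{s} L_i be a simple, finite-dimensional, ℤ-graded Lie algebra over a field F, and set L⁺ = ⊕_{i≥1} L_i and L⁻ = ⊕_{i≤−1} L_i. Then the centralizer of L⁺ in L equals L_s, and the centralizer of L⁻ in L equals L_{−r}: C_L(L⁺) = L_s and C_L(L⁻) = L_{−r}. -/
section Aux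

variable {F : Type*} [Field F] {L : Type*} [LieRing L] [LieAlgebra F L]

lemma aux_sum_eq_zero (Lg : ℤ → Submodule F L) (hindep : iSupIndep Lg)
    (T : Finset ℤ) (c : ℤ → L) (hc : ∀ i ∈ T, c i ∈ Lg i)
    (hsum : ∑ i ∈ T, c i = 0) : ∀ i ∈ T, c i = 0 := by
  induction T using Finset.induction_on with
  | empty => intro i hi; simp at hi
  | @insert a T ha IH =>
    have hmem : ∑ i ∈ T, c i ∈ ⨆ (j : ℤ) (_ : j ≠ a), Lg j := by
      refine Submodule.sum_mem _ fun i hi => ?_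
      have : Lg i ≤ ⨆ (j : ℤ) (_ : j ≠ a), Lg j :=
        le_iSup_of_le i (le_iSup_of_le (fun h => ha (h ▸ hi)) le_rfl)
      exact this (hc i (Finset.mem_insert_of_mem hi))
    rw [Finset.sum_insert ha] at hsum
    have hca : c a = 0 := by
      have h1 : c a ∈ Lg a := hc a (Finset.mem_insert_self a T)
      have h2 : c a ∈ ⨆ (j : ℤ) (_ : j ≠ a), Lg j := by
        have : c a = -∑ i ∈ T, c i := by rw [eq_neg_iff_add_eq_zero]; exact hsum
        rw [this]; exact neg_mem hmem
      exact Submodule.disjoint_def.mp (hindep a) _ h1 h2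
    have hrest : ∑ i ∈ T, c i = 0 := by rwa [hca, zero_add] at hsum
    intro i hi
    rcases Finset.mem_insert.mp hi with h | h
    · exact h ▸ hca
    · exact IH (fun j hj => hc j (Finset.mem_insert_of_mem hj)) hrest i h

end Aux

section Chain

variable {F : Type*} [Field F] {L : Type*} [LieRing L] [LieAlgebra F L]

/-- One step: add brackets by negative-degree elements. -/
def auxNegStep (Lg : ℤ → Submodule F L) (P : Submodule F L) : Submodule F L :=
  P ⊔ Submodule.span F {z : L | ∃ j : ℤ, j ≤ -1 ∧ ∃ y ∈ Lg j, ∃ u ∈ P, z = ⁅y, u⁆}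

def auxChain (Lg : ℤ → Submodule F L) (M : Submodule F L) : ℕ → Submodule F L
  | 0 => M
  | k + 1 => auxNegStep Lg (auxChain Lg M k)

lemma auxChain_mono (Lg : ℤ → Submodule F L) (M : Submodule F L) :
    Monotone (auxChain Lg M) :=
  monotone_nat_of_le_succ fun k => le_sup_left

lemma auxChain_le (Lg : ℤ → Submodule F L) (M N : Submodule F L) (hMN : M ≤ N)
    (hN : ∀ j : ℤ, j ≤ -1 → ∀ y ∈ Lg j, ∀ u ∈ N, ⁅y, u⁆ ∈ N) :
    ∀ k, auxChain Lg M k ≤ N := by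
  intro k
  induction k with
  | zero => exact hMN
  | succ k IH =>
    refine sup_le IH (Submodule.span_le.mpr ?_)
    rintro z ⟨j, hj, y, hy, u, hu, rfl⟩
    exact hN j hj y hy u (IH hu)

lemma auxChain_bracket_nonneg (Lg : ℤ → Submodule F L)
    (hbracket : ∀ i j : ℤ, ∀ x ∈ Lg i, ∀ y ∈ Lg j, ⁅x, y⁆ ∈ Lg (i + j))
    (M : Submodule F L)
    (hM : ∀ j : ℤ, 0 ≤ j → ∀ x ∈ Lg j, ∀ u ∈ M, ⁅x, u⁆ ∈ M) :
    ∀ k, ∀ j : ℤ, 0 ≤ j → ∀ x ∈ Lg j, ∀ u ∈ auxChain Lg M k,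
      ⁅x, u⁆ ∈ auxChain Lg M k := by
  intro k
  induction k with
  | zero => exact hM
  | succ k IH =>
    intro j hj x hx u hu
    have key : auxChain Lg M (k + 1) ≤
        Submodule.comap ((LieAlgebra.ad F L) x) (auxChain Lg M (k + 1)) := by
      refine sup_le ?_ (Submodule.span_le.mpr ?_)
      · intro v hv
        exact Submodule.mem_comap.mpr (le_sup_left (a := auxChain Lg M k)
          (IH j hj x hx v hv))
      · rintro z ⟨j', hj', y, hy, v, hv, rfl⟩
        have hxy : ⁅x, y⁆ ∈ Lg (j + j') := hbracket j j' x hx y hy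
        have hleib : ⁅x, ⁅y, v⁆⁆ = ⁅⁅x, y⁆, v⁆ + ⁅y, ⁅x, v⁆⁆ := leibniz_lie x y v
        have h2 : ⁅y, ⁅x, v⁆⁆ ∈ auxChain Lg M (k + 1) := by
          refine le_sup_right (a := auxChain Lg M k) (Submodule.subset_span ?_)
          exact ⟨j', hj', y, hy, ⁅x, v⁆, IH j hj x hx v hv, rfl⟩
        have h1 : ⁅⁅x, y⁆, v⁆ ∈ auxChain Lg M (k + 1) := by
          rcases le_or_gt 0 (j + j') with h | h
          · exact le_sup_left (a := auxChain Lg M k) (IH (j + j') h _ hxy v hv)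
          · refine le_sup_right (a := auxChain Lg M k) (Submodule.subset_span ?_)
            exact ⟨j + j', by omega, ⁅x, y⁆, hxy, v, hv, rfl⟩
        refine Submodule.mem_comap.mpr ?_
        show ⁅x, ⁅y, v⁆⁆ ∈ _
        rw [hleib]
        exact add_mem h1 h2
    exact key hu

end Chain

section Main

variable {F : Type*} [Field F] {L : Type*} [LieRing L] [LieAlgebra F L]

lemma aux_lie_sum (y : L) (T : Finset ℤ) (g : ℤ → L) :
    ⁅∑ i ∈ T, g i, y⁆ = ∑ i ∈ T, ⁅g i, y⁆ := by
  induction T using Finset.cons_induction with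
  | empty => simp
  | cons a T ha IH => rw [Finset.sum_cons, Finset.sum_cons, add_lie, IH]

/-- Centralizer of the positive part. -/
def auxCent (Lg : ℤ → Submodule F L) : Submodule F L where
  carrier := {x : L | ∀ i : ℤ, 1 ≤ i → ∀ y ∈ Lg i, ⁅x, y⁆ = 0}
  add_mem' := by
    intro a b ha hb i hi y hy
    rw [add_lie, ha i hi y hy, hb i hi y hy, add_zero]
  zero_mem' := by intro i hi y hy; rw [zero_lie]
  smul_mem' := by
    intro t a ha i hi y hy
    rw [smul_lie, ha i hi y hy, smul_zero]

theorem aux_main [LieAlgebra.IsSimple F L] (Lg : ℤ → Submodule F L)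
    (hindep : iSupIndep Lg) (htop : ⨆ i, Lg i = ⊤)
    (hbracket : ∀ i j : ℤ, ∀ x ∈ Lg i, ∀ y ∈ Lg j, ⁅x, y⁆ ∈ Lg (i + j))
    (s : ℤ) (hbound : ∀ i : ℤ, s < i → Lg i = ⊥) (hnes : Lg s ≠ ⊥) :
    ∀ x : L, (∀ i : ℤ, 1 ≤ i → ∀ y ∈ Lg i, ⁅x, y⁆ = 0) ↔ x ∈ Lg s := by
  -- the easy direction
  have easy : ∀ x ∈ Lg s, ∀ i : ℤ, 1 ≤ i → ∀ y ∈ Lg i, ⁅x, y⁆ = 0 := by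
    intro x hx i hi y hy
    have : ⁅x, y⁆ ∈ Lg (s + i) := hbracket s i x hx y hy
    rwa [hbound (s + i) (by omega), Submodule.mem_bot] at this
  -- set up the objects
  set C : Submodule F L := auxCent Lg with hC
  set M : Submodule F L := ⨆ (i : ℤ) (_ : i < s), (C ⊓ Lg i) with hM
  set N : Submodule F L := ⨆ (i : ℤ) (_ : i < s), Lg i with hN
  have hMN : M ≤ N := iSup_mono fun i => iSup_mono fun _ => inf_le_right
  have hLgN : ∀ i : ℤ, i < s → Lg i ≤ N := fun i hi =>
    le_iSup_of_le i (le_iSup_of_le hi le_rfl)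
  have hNstep : ∀ j : ℤ, j ≤ -1 → ∀ y ∈ Lg j, ∀ u ∈ N, ⁅y, u⁆ ∈ N := by
    intro j hj y hy u hu
    have key : N ≤ Submodule.comap ((LieAlgebra.ad F L) y) N := by
      refine iSup_le fun i => iSup_le fun hi => ?_
      intro v hv
      refine Submodule.mem_comap.mpr ?_
      show ⁅y, v⁆ ∈ N
      exact hLgN (j + i) (by omega) (hbracket j i y hy v hv)
    exact key hu
  -- C is stable under bracketing with degree-0 elements
  have hC0 : ∀ x ∈ Lg 0, ∀ u ∈ C, ⁅x, u⁆ ∈ C := by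
    intro x hx u hu p hp z hz
    have h1 : ⁅u, z⁆ = 0 := hu p hp z hz
    have h2 : ⁅u, ⁅x, z⁆⁆ = 0 := by
      have : ⁅x, z⁆ ∈ Lg (0 + p) := hbracket 0 p x hx z hz
      rw [zero_add] at this
      exact hu p hp _ this
    have hleib : ⁅x, ⁅u, z⁆⁆ = ⁅⁅x, u⁆, z⁆ + ⁅u, ⁅x, z⁆⁆ := leibniz_lie x u z
    rw [h1, h2, lie_zero, add_zero] at hleib
    exact hleib.symm
  -- M is stable under brackets with nonnegative-degree elements
  have hMstable : ∀ j : ℤ, 0 ≤ j → ∀ x ∈ Lg j, ∀ u ∈ M, ⁅x, u⁆ ∈ M := by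
    intro j hj x hx u hu
    have key : M ≤ Submodule.comap ((LieAlgebra.ad F L) x) M := by
      refine iSup_le fun i => iSup_le fun hi => ?_
      rintro v ⟨hvC, hvLg⟩
      refine Submodule.mem_comap.mpr ?_
      show ⁅x, v⁆ ∈ M
      rcases eq_or_lt_of_le hj with h0 | h1
      · -- j = 0
        have hx0 : x ∈ Lg 0 := by rwa [← h0] at hx
        have hmem : ⁅x, v⁆ ∈ C ⊓ Lg i := by
          constructor
          · exact hC0 x hx0 v hvC
          · have : ⁅x, v⁆ ∈ Lg (0 + i) := hbracket 0 i x hx0 v hvLg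
            rwa [zero_add] at this
        have hle : C ⊓ Lg i ≤ M := le_iSup₂ (f := fun i (_ : i < s) => C ⊓ Lg i) i hi
        exact hle hmem
      · -- 1 ≤ j
        have : ⁅v, x⁆ = 0 := hvC j (by omega) x hx
        have hzero : ⁅x, v⁆ = 0 := by rw [← lie_skew, this, neg_zero]
        rw [hzero]
        exact zero_mem M
    exact key hu
  -- the ideal
  set Iinf : Submodule F L := ⨆ k, auxChain Lg M k with hIinf
  have hIle : Iinf ≤ N := iSup_le (auxChain_le Lg M N hMN hNstep)
  have hdir : Directed (· ≤ ·) (auxChain Lg M) := (auxChain_mono Lg M).directed_le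
  have hlie : ∀ (x : L) (m : L), m ∈ Iinf → ⁅x, m⁆ ∈ Iinf := by
    intro x m hm
    obtain ⟨k, hk⟩ := (Submodule.mem_iSup_of_directed _ hdir).mp hm
    have hx : x ∈ ⨆ i, Lg i := by rw [htop]; exact Submodule.mem_top
    refine Submodule.iSup_induction (motive := fun x => ⁅x, m⁆ ∈ Iinf) Lg hx ?_ ?_ ?_
    · intro j z hz
      rcases le_or_gt 0 j with h | h
      · exact le_iSup (auxChain Lg M) k
          (auxChain_bracket_nonneg Lg hbracket M hMstable k j h z hz m hk)
      · refine le_iSup (auxChain Lg M) (k + 1) ?_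
        exact le_sup_right (a := auxChain Lg M k)
          (Submodule.subset_span ⟨j, by omega, z, hz, m, hk, rfl⟩)
    · show ⁅(0 : L), m⁆ ∈ Iinf
      rw [zero_lie]; exact zero_mem Iinf
    · intro a b ha hb
      show ⁅a + b, m⁆ ∈ Iinf
      rw [add_lie]
      exact add_mem ha hb
  set I : LieIdeal F L := ⟨Iinf, fun {x m} hm => hlie x m hm⟩ with hI
  have hImem : ∀ z : L, z ∈ I ↔ z ∈ Iinf := fun z => Iff.rfl
  -- simplicity: I is bot
  have hMbot : M = ⊥ := by
    rcases LieAlgebra.IsSimple.eq_bot_or_eq_top I with hbot | htopI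
    · have : Iinf = ⊥ := by
        rw [eq_bot_iff]
        intro z hz
        have : z ∈ I := hz
        rw [hbot] at this
        exact this
      rw [eq_bot_iff]
      exact le_trans (le_trans (le_iSup (auxChain Lg M) 0) (le_of_eq hIinf.symm))
        this.le
    · exfalso
      obtain ⟨v, hv, hvne⟩ := Submodule.exists_mem_ne_zero_of_ne_bot hnes
      have hvI : v ∈ Iinf := by
        have : v ∈ I := by rw [htopI]; exact LieSubmodule.mem_top v
        exact this
      have hvN : v ∈ N := hIle hvI
      have hNle : N ≤ ⨆ (j : ℤ) (_ : j ≠ s), Lg j :=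
        iSup_le fun i => iSup_le fun hi => le_iSup_of_le i
          (le_iSup_of_le (ne_of_lt hi) le_rfl)
      exact hvne (Submodule.disjoint_def.mp (hindep s) v hv (hNle hvN))
  -- conclude
  intro x
  constructor
  · intro hx
    classical
    have hxC : x ∈ C := hx
    have hxtop : x ∈ ⨆ i, Lg i := by rw [htop]; exact Submodule.mem_top
    obtain ⟨f, hf⟩ := (Submodule.mem_iSup_iff_exists_dfinsupp' Lg x).mp hxtop
    have hxsum : x = ∑ i ∈ f.support, ((f i : L)) := by
      rw [← hf]; rfl
    -- each component lies in C
    have hcomp : ∀ i ∈ f.support, ((f i : L)) ∈ C := by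
      intro i hi p hp y hy
      -- sum of brackets is zero
      have hsum0 : ∑ m ∈ f.support.image (· + p), ⁅((f (m - p) : L)), y⁆ = 0 := by
        rw [Finset.sum_image (fun a _ b _ h => add_left_injective p h)]
        have heq : ∀ a ∈ f.support, ⁅((f (a + p - p) : L)), y⁆ = ⁅((f a : L)), y⁆ := by
          intro a _
          rw [show a + p - p = a from by omega]
        rw [Finset.sum_congr rfl heq, ← aux_lie_sum y f.support (fun a => ((f a : L))),
          ← hxsum]
        exact hxC p hp y hy
      have hzero := aux_sum_eq_zero Lg hindep (f.support.image (· + p))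
        (fun m => ⁅((f (m - p) : L)), y⁆)
        (by
          intro m hm
          obtain ⟨a, ha, rfl⟩ := Finset.mem_image.mp hm
          show ⁅((f (a + p - p) : L)), y⁆ ∈ Lg (a + p)
          rw [show a + p - p = a from by omega]
          exact hbracket a p _ (f a).2 y hy)
        hsum0
      have h2 : ⁅((f (i + p - p) : L)), y⁆ = 0 :=
        hzero (i + p) (Finset.mem_image_of_mem _ hi)
      rwa [show i + p - p = i from by omega] at h2
    rw [hxsum]
    refine Submodule.sum_mem _ fun i hi => ?_
    rcases lt_trichotomy i s with h | h | h
    · have hle : C ⊓ Lg i ≤ M := le_iSup₂ (f := fun i (_ : i < s) => C ⊓ Lg i) i h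
      have : ((f i : L)) ∈ M := hle ⟨hcomp i hi, (f i).2⟩
      rw [hMbot] at this
      rw [(Submodule.mem_bot F).mp this]
      exact zero_mem _
    · rw [← h]; exact (f i).2
    · have : ((f i : L)) ∈ (⊥ : Submodule F L) := by
        rw [← hbound i h]; exact (f i).2
      rw [(Submodule.mem_bot F).mp this]
      exact zero_mem _
  · intro hx
    exact easy x hx

end Main

/-- Let `L = ⊕_{i=-r}^{s} L_i` be a simple, finite-dimensional, ℤ-graded Lie
algebra over a field `F`, and set `L⁺ = ⊕_{i≥1} L_i`, `L⁻ = ⊕_{i≤-1} L_i`. Then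
`C_L(L⁺) = L_s` and `C_L(L⁻) = L_{-r}`. -/
theorem graded_simple_centralizer_of_positive_negative_parts
    (F : Type*) [Field F] (L : Type*) [LieRing L] [LieAlgebra F L]
    [FiniteDimensional F L] [LieAlgebra.IsSimple F L]
    (r s : ℤ) (hr : 1 ≤ r) (hs : 1 ≤ s)
    (Lg : ℤ → Submodule F L)
    (hinternal : DirectSum.IsInternal Lg)
    (hbracket : ∀ i j : ℤ, ∀ x ∈ Lg i, ∀ y ∈ Lg j, ⁅x, y⁆ ∈ Lg (i + j))
    (hbound : ∀ i : ℤ, (i < -r ∨ s < i) → Lg i = ⊥)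
    (hner : Lg (-r) ≠ ⊥) (hnes : Lg s ≠ ⊥) :
    (∀ x : L, (∀ i : ℤ, 1 ≤ i → ∀ y ∈ Lg i, ⁅x, y⁆ = 0) ↔ x ∈ Lg s) ∧
    (∀ x : L, (∀ i : ℤ, i ≤ -1 → ∀ y ∈ Lg i, ⁅x, y⁆ = 0) ↔ x ∈ Lg (-r)) := by
  obtain ⟨hindep, htop⟩ :=
    (DirectSum.isInternal_submodule_iff_iSupIndep_and_iSup_eq_top Lg).mp hinternal
  constructor
  · exact aux_main Lg hindep htop hbracket s (fun i hi => hbound i (Or.inr hi)) hnes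
  · -- flip the grading
    have hindep' : iSupIndep (fun i : ℤ => Lg (-i)) := hindep.comp neg_injective
    have htop' : ⨆ i : ℤ, Lg (-i) = ⊤ :=
      (((Equiv.neg ℤ).iSup_comp (g := Lg))).trans htop
    have hbracket' : ∀ i j : ℤ, ∀ x ∈ Lg (-i), ∀ y ∈ Lg (-j), ⁅x, y⁆ ∈ Lg (-(i + j)) := by
      intro i j x hx y hy
      have := hbracket (-i) (-j) x hx y hy
      rwa [show -i + -j = -(i + j) by ring] at this
    have hbound' : ∀ i : ℤ, r < i → Lg (-i) = ⊥ := fun i hi =>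
      hbound (-i) (Or.inl (by omega))
    have h2 := aux_main (fun i : ℤ => Lg (-i)) hindep' htop' hbracket' r hbound' hner
    intro x
    rw [← h2 x]
    constructor
    · intro h i hi y hy
      exact h (-i) (by omega) y hy
    · intro h i hi y hy
      refine h (-i) (by omega) y ?_
      show y ∈ Lg (- -i)
      rwa [neg_neg]
end

section
/- Let p be a prime and let a, b, r be natural numbers with a ≥ 1, 1 ≤ b ≤ p − 1, and 1 ≤ r ≤ p. Then the binomial coefficient C(r·p^a − b, p^a) is congruent to r − 1 modulo p. -/
/-- Let `p` be a prime and `a, b, r` natural numbers with `a ≥ 1`,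
`1 ≤ b ≤ p - 1`, and `1 ≤ r ≤ p`. Then `C(r·p^a - b, p^a) ≡ r - 1 (mod p)`. -/
theorem choose_mul_pow_sub_congr
    (p a b r : ℕ) (hp : p.Prime) (ha : 1 ≤ a)
    (hb1 : 1 ≤ b) (hb2 : b ≤ p - 1) (hr1 : 1 ≤ r) (hr2 : r ≤ p) :
    (r * p ^ a - b).choose (p ^ a) ≡ r - 1 [MOD p] := by
  haveI : Fact p.Prime := ⟨hp⟩
  have hp2 : 2 ≤ p := hp.two_le
  have hpa : p ≤ p ^ a := Nat.le_self_pow (by omega) p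
  have hbp : b < p ^ a := by omega
  set n := r * p ^ a - b with hn
  have hpa' : p ^ a ≤ r * p ^ a := Nat.le_mul_of_pos_left _ hr1
  have h1 : (r - 1) * p ^ a = r * p ^ a - p ^ a := by rw [Nat.sub_mul, one_mul]
  have hn' : n = (r - 1) * p ^ a + (p ^ a - b) := by omega
  have hdiv : n / p ^ a = r - 1 := by
    rw [hn', mul_comm, Nat.mul_add_div (pow_pos hp.pos a),
      Nat.div_eq_of_lt (by omega), Nat.add_zero]
  have hkdiv : p ^ a / p ^ a = 1 := Nat.div_self (pow_pos hp.pos a)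
  have key := Choose.choose_modEq_choose_mul_prod_range_choose (p := p) (n := n) (k := p ^ a) a
  have hprod : ∀ i ∈ Finset.range a, (p ^ a / p ^ i % p) = 0 := by
    intro i hi
    rw [Finset.mem_range] at hi
    rw [Nat.pow_div hi.le hp.pos]
    exact Nat.mul_mod_right p (p ^ (a - i - 1)) ▸ by
      rw [show a - i = (a - i - 1) + 1 by omega, pow_succ]
      simp [Nat.mul_mod_left]
  rw [← Int.natCast_modEq_iff]
  refine key.trans ?_
  rw [hdiv, hkdiv]
  have : ∏ i ∈ Finset.range a, Nat.choose (n / p ^ i % p) (p ^ a / p ^ i % p) = 1 := by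
    apply Finset.prod_eq_one
    intro i hi
    rw [hprod i hi, Nat.choose_zero_right]
  rw [this, Nat.choose_one_right, Nat.cast_one, mul_one]
end
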